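/- Weyl/Ky Fan stability: If A is a compact operator with lim_j j^{1/p} μ_j(A) = Λ existing, and B is compact with μ_j(B) = o(j^{-1/p}), then lim_j j^{1/p} μ_j(A+B) exists and equals Λ. -/
import Mathlib


open Filter Topology

variable {H : Type*} [NormedAddCommGroup H] [InnerProductSpace ℂ H] [CompleteSpace H]

/-- The `j`-th singular value of a bounded operator (approximation number):
for compact operators this is the `(j+1)`-th eigenvalue of `|T|` in decreasing order. -/
noncomputable def mu (T : H →L[ℂ] H) (j : ℕ) : ℝ :=
  sInf {c : ℝ | ∃ F : H →L[ℂ] H, FiniteDimensional ℂ (LinearMap.range F.toLinearMap) ∧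
    Module.finrank ℂ (LinearMap.range F.toLinearMap) ≤ j ∧ c = ‖T - F‖}

set_option linter.unusedSectionVars false
set_option linter.unusedVariables false

lemma ceil_seq_tendsto {ε : ℝ} (hε : 0 < ε) :
    Tendsto (fun j : ℕ => ⌈ε * j⌉₊) atTop atTop := by
  rw [← tendsto_natCast_atTop_iff (R := ℝ)]
  exact tendsto_atTop_mono (fun j => Nat.le_ceil (ε * j))
    (tendsto_natCast_atTop_atTop.const_mul_atTop hε)

lemma ceil_ratio_tendsto {ε : ℝ} (hε : 0 < ε) :
    Tendsto (fun j : ℕ => (⌈ε * j⌉₊ : ℝ) / j) atTop (𝓝 ε) := by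
  have hub : Tendsto (fun j : ℕ => ε + 1 / (j : ℝ)) atTop (𝓝 ε) := by
    simpa using (tendsto_const_nhds (x := ε)).add tendsto_one_div_atTop_nhds_zero_nat
  apply tendsto_of_tendsto_of_tendsto_of_le_of_le' tendsto_const_nhds hub
  · filter_upwards [eventually_ge_atTop 1] with j hj
    have hj0 : (0:ℝ) < j := by exact_mod_cast hj
    rw [le_div_iff₀ hj0]
    exact Nat.le_ceil _
  · filter_upwards [eventually_ge_atTop 1] with j hj
    have hj0 : (0:ℝ) < j := by exact_mod_cast hj
    rw [div_le_iff₀ hj0]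
    have h1 := (Nat.ceil_lt_add_one (by positivity : (0:ℝ) ≤ ε * j)).le
    have : (ε + 1 / (j:ℝ)) * j = ε * j + 1 := by field_simp
    linarith

lemma eps_choice_lt {c Λ : ℝ} (hΛ : Λ < c) (r : ℝ) :
    ∃ ε : ℝ, 0 < ε ∧ ε ≤ 1/2 ∧ ((1 - ε)⁻¹) ^ r * Λ < c := by
  have hbase : Tendsto (fun ε : ℝ => ((1 - ε)⁻¹) ^ r * Λ) (𝓝[>] 0) (𝓝 Λ) := by
    have h1 : Tendsto (fun ε : ℝ => (1 - ε)⁻¹) (𝓝 0) (𝓝 1) := by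
      have : Tendsto (fun ε : ℝ => 1 - ε) (𝓝 0) (𝓝 1) := by
        simpa using (tendsto_const_nhds (x := (1:ℝ))).sub (tendsto_id (x := 𝓝 (0:ℝ)))
      simpa using this.inv₀ one_ne_zero
    have h2 : Tendsto (fun ε : ℝ => ((1 - ε)⁻¹) ^ r * Λ) (𝓝 0) (𝓝 Λ) := by
      have := (h1.rpow_const (p := r) (Or.inl one_ne_zero)).mul_const Λ
      simpa [Real.one_rpow] using this
    exact h2.mono_left nhdsWithin_le_nhds
  have hev := hbase.eventually_lt_const hΛ
  have hmem : Set.Ioc (0:ℝ) (1/2) ∈ 𝓝[>] (0:ℝ) :=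
    Ioc_mem_nhdsGT_of_mem ⟨le_refl 0, by norm_num⟩
  obtain ⟨ε, hε1, hε2⟩ := (hev.and (eventually_of_mem hmem fun x hx => hx)).exists
  exact ⟨ε, hε2.1, hε2.2, hε1⟩

lemma eps_choice_gt {a Λ : ℝ} (hΛ : a < Λ) (r : ℝ) :
    ∃ ε : ℝ, 0 < ε ∧ ε ≤ 1/2 ∧ a < ((1 + ε)⁻¹) ^ r * Λ := by
  have hbase : Tendsto (fun ε : ℝ => ((1 + ε)⁻¹) ^ r * Λ) (𝓝[>] 0) (𝓝 Λ) := by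
    have h1 : Tendsto (fun ε : ℝ => (1 + ε)⁻¹) (𝓝 0) (𝓝 1) := by
      have : Tendsto (fun ε : ℝ => 1 + ε) (𝓝 0) (𝓝 1) := by
        simpa using (tendsto_const_nhds (x := (1:ℝ))).add (tendsto_id (x := 𝓝 (0:ℝ)))
      simpa using this.inv₀ one_ne_zero
    have h2 : Tendsto (fun ε : ℝ => ((1 + ε)⁻¹) ^ r * Λ) (𝓝 0) (𝓝 Λ) := by
      have := (h1.rpow_const (p := r) (Or.inl one_ne_zero)).mul_const Λ
      simpa [Real.one_rpow] using this
    exact h2.mono_left nhdsWithin_le_nhds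
  have hev := hbase.eventually_const_lt hΛ
  have hmem : Set.Ioc (0:ℝ) (1/2) ∈ 𝓝[>] (0:ℝ) :=
    Ioc_mem_nhdsGT_of_mem ⟨le_refl 0, by norm_num⟩
  obtain ⟨ε, hε1, hε2⟩ := (hev.and (eventually_of_mem hmem fun x hx => hx)).exists
  exact ⟨ε, hε2.1, hε2.2, hε1⟩


lemma muSet_bddBelow (T : H →L[ℂ] H) (j : ℕ) :
    BddBelow {c : ℝ | ∃ F : H →L[ℂ] H, FiniteDimensional ℂ (LinearMap.range F.toLinearMap) ∧
      Module.finrank ℂ (LinearMap.range F.toLinearMap) ≤ j ∧ c = ‖T - F‖} :=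
  ⟨0, by rintro c ⟨F, _, _, rfl⟩; positivity⟩

lemma muSet_mem (T F : H →L[ℂ] H) (j : ℕ)
    (h1 : FiniteDimensional ℂ (LinearMap.range F.toLinearMap))
    (h2 : Module.finrank ℂ (LinearMap.range F.toLinearMap) ≤ j) :
    ‖T - F‖ ∈ {c : ℝ | ∃ F : H →L[ℂ] H, FiniteDimensional ℂ (LinearMap.range F.toLinearMap) ∧
      Module.finrank ℂ (LinearMap.range F.toLinearMap) ≤ j ∧ c = ‖T - F‖} :=
  ⟨F, h1, h2, rfl⟩

lemma muSet_nonempty (T : H →L[ℂ] H) (j : ℕ) :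
    Set.Nonempty {c : ℝ | ∃ F : H →L[ℂ] H, FiniteDimensional ℂ (LinearMap.range F.toLinearMap) ∧
      Module.finrank ℂ (LinearMap.range F.toLinearMap) ≤ j ∧ c = ‖T - F‖} := by
  have e : LinearMap.range (0 : H →L[ℂ] H).toLinearMap = ⊥ := by simp
  refine ⟨‖T - 0‖, 0, ?_, ?_, rfl⟩ <;> rw [e]
  · infer_instance
  · simp

lemma mu_nonneg (T : H →L[ℂ] H) (j : ℕ) : 0 ≤ mu T j :=
  Real.sInf_nonneg (by rintro c ⟨F, _, _, rfl⟩; positivity)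

lemma mu_le (T F : H →L[ℂ] H) (j : ℕ)
    (h1 : FiniteDimensional ℂ (LinearMap.range F.toLinearMap))
    (h2 : Module.finrank ℂ (LinearMap.range F.toLinearMap) ≤ j) :
    mu T j ≤ ‖T - F‖ :=
  csInf_le (muSet_bddBelow T j) (muSet_mem T F j h1 h2)

lemma mu_neg (T : H →L[ℂ] H) (j : ℕ) : mu (-T) j = mu T j := by
  have key : ∀ (S : H →L[ℂ] H) (j : ℕ), mu (-S) j ≤ mu S j := by
    intro S j
    apply le_csInf (muSet_nonempty S j)
    rintro c ⟨F, h1, h2, rfl⟩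
    have e1 : LinearMap.range (-F).toLinearMap = LinearMap.range F.toLinearMap := by
      simp
    have := mu_le (-S) (-F) j (by rw [e1]; exact h1) (by rw [e1]; exact h2)
    calc mu (-S) j ≤ ‖-S - -F‖ := this
      _ = ‖S - F‖ := by rw [show -S - -F = -(S - F) by abel, norm_neg]
  have h2 := key (-T) j
  rw [neg_neg] at h2
  exact le_antisymm (key T j) h2

lemma mu_add_le (A B : H →L[ℂ] H) (j k : ℕ) :
    mu (A + B) (j + k) ≤ mu A j + mu B k := by
  have key : ∀ a ∈ {c : ℝ | ∃ F : H →L[ℂ] H,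
      FiniteDimensional ℂ (LinearMap.range F.toLinearMap) ∧
      Module.finrank ℂ (LinearMap.range F.toLinearMap) ≤ j ∧ c = ‖A - F‖},
      ∀ b ∈ {c : ℝ | ∃ F : H →L[ℂ] H,
      FiniteDimensional ℂ (LinearMap.range F.toLinearMap) ∧
      Module.finrank ℂ (LinearMap.range F.toLinearMap) ≤ k ∧ c = ‖B - F‖},
      mu (A + B) (j + k) ≤ a + b := by
    rintro a ⟨F, hF1, hF2, rfl⟩ b ⟨G, hG1, hG2, rfl⟩
    have hle : LinearMap.range (F + G).toLinearMap ≤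
        LinearMap.range F.toLinearMap ⊔ LinearMap.range G.toLinearMap := by
      rintro x ⟨y, rfl⟩
      exact Submodule.add_mem_sup ⟨y, rfl⟩ ⟨y, rfl⟩
    haveI := hF1; haveI := hG1
    haveI : FiniteDimensional ℂ
        (LinearMap.range F.toLinearMap ⊔ LinearMap.range G.toLinearMap :
          Submodule ℂ H) := Submodule.finiteDimensional_sup _ _
    haveI : FiniteDimensional ℂ (LinearMap.range (F + G).toLinearMap) :=
      Submodule.finiteDimensional_of_le hle
    have hrk : Module.finrank ℂ (LinearMap.range (F + G).toLinearMap) ≤ j + k := by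
      calc Module.finrank ℂ (LinearMap.range (F + G).toLinearMap)
          ≤ Module.finrank ℂ
            (LinearMap.range F.toLinearMap ⊔ LinearMap.range G.toLinearMap :
              Submodule ℂ H) := Submodule.finrank_mono hle
        _ ≤ _ := le_trans (Submodule.finrank_add_le_finrank_add_finrank _ _)
            (add_le_add hF2 hG2)
    calc mu (A + B) (j + k) ≤ ‖(A + B) - (F + G)‖ := mu_le _ _ _ ‹_› hrk
      _ = ‖(A - F) + (B - G)‖ := by congr 1; abel
      _ ≤ ‖A - F‖ + ‖B - G‖ := norm_add_le _ _
  have h1 : ∀ a ∈ {c : ℝ | ∃ F : H →L[ℂ] H,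
      FiniteDimensional ℂ (LinearMap.range F.toLinearMap) ∧
      Module.finrank ℂ (LinearMap.range F.toLinearMap) ≤ j ∧ c = ‖A - F‖},
      mu (A + B) (j + k) - a ≤ mu B k := fun a ha =>
    le_csInf (muSet_nonempty B k) fun b hb => by linarith [key a ha b hb]
  have h2 : mu (A + B) (j + k) - mu B k ≤ mu A j :=
    le_csInf (muSet_nonempty A j) fun a ha => by linarith [h1 a ha]
  linarith


/-- Weyl/Ky Fan stability: if `lim_j j^{1/p} μ_j(A) = Λ` and `μ_j(B) = o(j^{-1/p})`, then
`lim_j j^{1/p} μ_j(A+B) = Λ`. -/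
theorem mu_add_littleO_stability [SecondCountableTopology H] (p : ℝ) (hp : 0 < p)
    (A B : H →L[ℂ] H) (hAc : IsCompactOperator ⇑A) (hBc : IsCompactOperator ⇑B) (Λ : ℝ)
    (hA : Tendsto (fun j : ℕ => ((j : ℝ)) ^ (1 / p) * mu A j) atTop (𝓝 Λ))
    (hB : (fun j : ℕ => mu B j) =o[atTop] fun j : ℕ => ((j : ℝ)) ^ (-(1 / p))) :
    Tendsto (fun j : ℕ => ((j : ℝ)) ^ (1 / p) * mu (A + B) j) atTop (𝓝 Λ) := by
  have hq : 0 < 1 / p := by positivity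
  -- g := j^{1/p} μ_j(B) → 0
  have hg : Tendsto (fun j : ℕ => ((j : ℝ)) ^ (1 / p) * mu B j) atTop (𝓝 0) := by
    apply hB.tendsto_div_nhds_zero.congr'
    filter_upwards [eventually_ge_atTop 1] with j hj
    have hj0 : (0:ℝ) < j := by exact_mod_cast hj
    rw [Real.rpow_neg hj0.le, div_inv_eq_mul, mul_comm]
  rw [tendsto_order]
  constructor
  · -- lower bound
    intro a ha
    obtain ⟨ε, hε0, hε2, hεa⟩ := eps_choice_gt ha (1 / p)
    set k : ℕ → ℕ := fun j => ⌈ε * j⌉₊ with hkdef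
    have hkT : Tendsto k atTop atTop := ceil_seq_tendsto hε0
    have hkr : Tendsto (fun j : ℕ => (k j : ℝ) / j) atTop (𝓝 ε) := ceil_ratio_tendsto hε0
    have hjk : Tendsto (fun j : ℕ => (j : ℝ) / k j) atTop (𝓝 ε⁻¹) := by
      apply (hkr.inv₀ hε0.ne').congr'
      filter_upwards [eventually_ge_atTop 1] with j hj
      rw [inv_div]
    have hjjk : Tendsto (fun j : ℕ => (j : ℝ) / ((j : ℝ) + k j)) atTop (𝓝 (1 + ε)⁻¹) := by
      have h1 : Tendsto (fun j : ℕ => ((j : ℝ) + k j) / j) atTop (𝓝 (1 + ε)) := by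
        apply ((tendsto_const_nhds (x := (1:ℝ))).add hkr).congr'
        filter_upwards [eventually_ge_atTop 1] with j hj
        have hj0 : (0:ℝ) < j := by exact_mod_cast hj
        field_simp
      apply (h1.inv₀ (by positivity)).congr'
      filter_upwards [eventually_ge_atTop 1] with j hj
      rw [inv_div]
    have hfk : Tendsto (fun j : ℕ => ((j + k j : ℕ) : ℝ) ^ (1 / p) * mu A (j + k j))
        atTop (𝓝 Λ) :=
      hA.comp (tendsto_atTop_mono (fun j => Nat.le_add_right j (k j)) tendsto_id)
    have hgk : Tendsto (fun j : ℕ => ((k j : ℕ) : ℝ) ^ (1 / p) * mu B (k j)) atTop (𝓝 0) :=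
      hg.comp hkT
    have hlow : Tendsto (fun j : ℕ =>
        ((j : ℝ) / ((j : ℝ) + k j)) ^ (1 / p) * (((j + k j : ℕ) : ℝ) ^ (1 / p) * mu A (j + k j))
        - ((j : ℝ) / k j) ^ (1 / p) * (((k j : ℕ) : ℝ) ^ (1 / p) * mu B (k j)))
        atTop (𝓝 (((1 + ε)⁻¹) ^ (1 / p) * Λ)) := by
      have := ((hjjk.rpow_const (Or.inr hq.le)).mul hfk).sub
        ((hjk.rpow_const (Or.inr hq.le)).mul hgk)
      simpa using this
    have h1 := hlow.eventually_const_lt hεa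
    filter_upwards [h1, eventually_ge_atTop 1, hkT.eventually_ge_atTop 1] with j hj1 hj hkj
    have hj0 : (0:ℝ) < j := by exact_mod_cast hj
    have hk0 : (0:ℝ) < k j := by exact_mod_cast hkj
    have key : mu A (j + k j) ≤ mu (A + B) j + mu B (k j) := by
      have h := mu_add_le (A + B) (-B) j (k j)
      rwa [add_neg_cancel_right, mu_neg] at h
    have e1 : ((j : ℝ)) ^ (1 / p)
        = ((j : ℝ) / ((j : ℝ) + k j)) ^ (1 / p) * ((j : ℝ) + k j) ^ (1 / p) := by
      rw [← Real.mul_rpow (by positivity) (by positivity), div_mul_cancel₀]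
      positivity
    have e2 : ((j : ℝ)) ^ (1 / p) = ((j : ℝ) / k j) ^ (1 / p) * ((k j : ℝ)) ^ (1 / p) := by
      rw [← Real.mul_rpow (by positivity) (by positivity), div_mul_cancel₀]
      positivity
    have ecast : ((j + k j : ℕ) : ℝ) = (j : ℝ) + k j := by push_cast; ring
    have eq1 : ((j : ℝ) / ((j : ℝ) + k j)) ^ (1 / p)
          * (((j + k j : ℕ) : ℝ) ^ (1 / p) * mu A (j + k j))
        = ((j : ℝ)) ^ (1 / p) * mu A (j + k j) := by
      rw [ecast, ← mul_assoc, ← e1]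
    have eq2 : ((j : ℝ) / k j) ^ (1 / p) * (((k j : ℕ) : ℝ) ^ (1 / p) * mu B (k j))
        = ((j : ℝ)) ^ (1 / p) * mu B (k j) := by
      rw [← mul_assoc, ← e2]
    rw [eq1, eq2] at hj1
    have hmul := mul_le_mul_of_nonneg_left key (Real.rpow_nonneg hj0.le (1 / p))
    rw [mul_add] at hmul
    linarith
  · -- upper bound
    intro b hb
    obtain ⟨ε, hε0, hε2, hεb⟩ := eps_choice_lt hb (1 / p)
    set k : ℕ → ℕ := fun j => ⌈ε * j⌉₊ with hkdef
    set m : ℕ → ℕ := fun j => j - k j with hmdef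
    have hkT : Tendsto k atTop atTop := ceil_seq_tendsto hε0
    have hkr : Tendsto (fun j : ℕ => (k j : ℝ) / j) atTop (𝓝 ε) := ceil_ratio_tendsto hε0
    have h1ε : (0:ℝ) < 1 - ε := by linarith
    have hkle : ∀ᶠ j : ℕ in atTop, k j ≤ j := by
      filter_upwards [eventually_ge_atTop 2] with j hj
      have hj2 : (2:ℝ) ≤ j := by exact_mod_cast hj
      have hceil := (Nat.ceil_lt_add_one (by positivity : (0:ℝ) ≤ ε * j)).le
      have : (k j : ℝ) ≤ j := by
        have : ε * j + 1 ≤ j := by nlinarith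
        linarith [hceil]
      exact_mod_cast this
    have hmcast : ∀ᶠ j : ℕ in atTop, (m j : ℝ) = (j : ℝ) - k j := by
      filter_upwards [hkle] with j hj
      simp [hmdef, Nat.cast_sub hj]
    have hmlb : ∀ᶠ j : ℕ in atTop, (1 - ε) * j + (-1) ≤ (m j : ℝ) := by
      filter_upwards [hmcast] with j hj
      have hceil := (Nat.ceil_lt_add_one (by positivity : (0:ℝ) ≤ ε * j)).le
      rw [hj]
      have : (k j : ℝ) ≤ ε * j + 1 := hceil
      nlinarith [this]
    have hmT : Tendsto m atTop atTop := by
      rw [← tendsto_natCast_atTop_iff (R := ℝ)]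
      exact tendsto_atTop_mono' _ hmlb
        (tendsto_atTop_add_const_right _ (-1)
          (tendsto_natCast_atTop_atTop.const_mul_atTop h1ε))
    have hmr : Tendsto (fun j : ℕ => (m j : ℝ) / j) atTop (𝓝 (1 - ε)) := by
      apply ((tendsto_const_nhds (x := (1:ℝ))).sub hkr).congr'
      filter_upwards [hmcast, eventually_ge_atTop 1] with j hjm hj
      have hj0 : (0:ℝ) < j := by exact_mod_cast hj
      rw [hjm, sub_div, div_self hj0.ne']
    have hjm : Tendsto (fun j : ℕ => (j : ℝ) / m j) atTop (𝓝 (1 - ε)⁻¹) := by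
      apply (hmr.inv₀ h1ε.ne').congr'
      filter_upwards [eventually_ge_atTop 1] with j hj
      rw [inv_div]
    have hjk : Tendsto (fun j : ℕ => (j : ℝ) / k j) atTop (𝓝 ε⁻¹) := by
      apply (hkr.inv₀ hε0.ne').congr'
      filter_upwards [eventually_ge_atTop 1] with j hj
      rw [inv_div]
    have hfm : Tendsto (fun j : ℕ => ((m j : ℕ) : ℝ) ^ (1 / p) * mu A (m j)) atTop (𝓝 Λ) :=
      hA.comp hmT
    have hgk : Tendsto (fun j : ℕ => ((k j : ℕ) : ℝ) ^ (1 / p) * mu B (k j)) atTop (𝓝 0) :=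
      hg.comp hkT
    have hup : Tendsto (fun j : ℕ =>
        ((j : ℝ) / m j) ^ (1 / p) * (((m j : ℕ) : ℝ) ^ (1 / p) * mu A (m j))
        + ((j : ℝ) / k j) ^ (1 / p) * (((k j : ℕ) : ℝ) ^ (1 / p) * mu B (k j)))
        atTop (𝓝 (((1 - ε)⁻¹) ^ (1 / p) * Λ)) := by
      have := ((hjm.rpow_const (Or.inr hq.le)).mul hfm).add
        ((hjk.rpow_const (Or.inr hq.le)).mul hgk)
      simpa using this
    have h1 := hup.eventually_lt_const hεb
    filter_upwards [h1, eventually_ge_atTop 1, hkT.eventually_ge_atTop 1,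
      hmT.eventually_ge_atTop 1, hkle] with j hj1 hj hkj hmj hklej
    have hj0 : (0:ℝ) < j := by exact_mod_cast hj
    have hk0 : (0:ℝ) < k j := by exact_mod_cast hkj
    have hm0 : (0:ℝ) < m j := by exact_mod_cast hmj
    have hsum : m j + k j = j := Nat.sub_add_cancel hklej
    have key : mu (A + B) j ≤ mu A (m j) + mu B (k j) := by
      conv_lhs => rw [← hsum]
      exact mu_add_le A B (m j) (k j)
    have e1 : ((j : ℝ)) ^ (1 / p) = ((j : ℝ) / m j) ^ (1 / p) * ((m j : ℝ)) ^ (1 / p) := by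
      rw [← Real.mul_rpow (by positivity) (by positivity), div_mul_cancel₀]
      positivity
    have e2 : ((j : ℝ)) ^ (1 / p) = ((j : ℝ) / k j) ^ (1 / p) * ((k j : ℝ)) ^ (1 / p) := by
      rw [← Real.mul_rpow (by positivity) (by positivity), div_mul_cancel₀]
      positivity
    have eq1 : ((j : ℝ) / m j) ^ (1 / p) * (((m j : ℕ) : ℝ) ^ (1 / p) * mu A (m j))
        = ((j : ℝ)) ^ (1 / p) * mu A (m j) := by rw [← mul_assoc, ← e1]
    have eq2 : ((j : ℝ) / k j) ^ (1 / p) * (((k j : ℕ) : ℝ) ^ (1 / p) * mu B (k j))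
        = ((j : ℝ)) ^ (1 / p) * mu B (k j) := by rw [← mul_assoc, ← e2]
    rw [eq1, eq2] at hj1
    have hmul := mul_le_mul_of_nonneg_left key (Real.rpow_nonneg hj0.le (1 / p))
    rw [mul_add] at hmul
    linarith
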